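/- Let ψ : ℝ² → ℝ be quasi-concave and strictly monotone in the sense that ψ(a + ε, b + ε) > ψ(a, b) for all ε > 0, and let Y ⊆ ℝ² be a finite set. Then any maximizer of ψ over the convex hull of Y lies on the topological boundary of the convex hull; moreover it is a convex combination of at most two points of Y. -/

import Mathlib

open Set

/-- If a nonzero linear functional is maximized at `x` over the convex hull of a finite
set `Y` in the plane, then `x` is a convex combination of two points of `Y`. -/
lemma key_two_points (f : (ℝ × ℝ) →ₗ[ℝ] ℝ) (hf : f ≠ 0) (Y : Finset (ℝ × ℝ)) (x : ℝ × ℝ)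
    (hx : x ∈ convexHull ℝ (Y : Set (ℝ × ℝ)))
    (hle : ∀ p ∈ convexHull ℝ (Y : Set (ℝ × ℝ)), f p ≤ f x) :
    ∃ y₁ ∈ Y, ∃ y₂ ∈ Y, ∃ t : ℝ, t ∈ Set.Icc (0 : ℝ) 1 ∧
      x = t • y₁ + (1 - t) • y₂ := by
  classical
  have hxY := hx
  rw [Finset.convexHull_eq] at hxY
  obtain ⟨w, hw0, hw1, hwx⟩ := hxY
  have hxsum : ∑ y ∈ Y, w y • y = x := by
    rw [← hwx, Finset.centerMass_eq_of_sum_1 _ _ hw1]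
    simp
  have hfx : ∑ y ∈ Y, w y * f y = f x := by
    rw [← hxsum]
    simp [map_sum, map_smul, smul_eq_mul]
  -- all points with positive weight lie on the supporting line
  have hface : ∀ y ∈ Y, w y ≠ 0 → f y = f x := by
    by_contra h
    push_neg at h
    obtain ⟨y₀, hy₀Y, hwy₀, hfy₀⟩ := h
    have hstrict : ∑ y ∈ Y, w y * f y < ∑ y ∈ Y, w y * f x := by
      apply Finset.sum_lt_sum
      · intro i hi
        exact mul_le_mul_of_nonneg_left (hle i (subset_convexHull ℝ _ hi)) (hw0 i hi)
      · refine ⟨y₀, hy₀Y, ?_⟩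
        have h1 : f y₀ < f x :=
          lt_of_le_of_ne (hle y₀ (subset_convexHull ℝ _ hy₀Y)) hfy₀
        exact mul_lt_mul_of_pos_left h1 (lt_of_le_of_ne (hw0 y₀ hy₀Y) (Ne.symm hwy₀))
    rw [hfx, ← Finset.sum_mul, hw1, one_mul] at hstrict
    exact lt_irrefl _ hstrict
  set Y' : Finset (ℝ × ℝ) := Y.filter (fun y => f y = f x) with hY'
  have hw1' : ∑ y ∈ Y', w y = 1 := by
    rw [hY', Finset.sum_filter_of_ne (fun y hy h0 => hface y hy h0), hw1]
  have hx' : x ∈ convexHull ℝ (Y' : Set (ℝ × ℝ)) := by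
    rw [Finset.convexHull_eq]
    refine ⟨w, fun y hy => hw0 y (Finset.mem_filter.1 hy).1, hw1', ?_⟩
    rw [Finset.centerMass_eq_of_sum_1 _ _ hw1']
    simp only [id]
    rw [hY', Finset.sum_filter_of_ne, hxsum]
    intro y hy h0
    exact hface y hy (fun hw => h0 (by simp [hw]))
  -- Carathéodory
  rw [convexHull_eq_union] at hx'
  simp only [Set.mem_iUnion, exists_prop] at hx'
  obtain ⟨t, hts, hai, hxt⟩ := hx'
  have htline : ∀ y ∈ t, f y = f x := fun y hy => (Finset.mem_filter.1 (hts hy)).2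
  have htY : ∀ y ∈ t, y ∈ Y := fun y hy => (Finset.mem_filter.1 (hts hy)).1
  -- the kernel of f is 1-dimensional
  obtain ⟨v, hv⟩ : ∃ v, f v ≠ 0 := by
    by_contra h
    push_neg at h
    exact hf (LinearMap.ext fun v => by simp [h v])
  have hrange : LinearMap.range f = ⊤ := by
    rw [eq_top_iff]
    rintro c -
    exact ⟨(c / f v) • v, by rw [map_smul, smul_eq_mul]; field_simp⟩
  have hker : Module.finrank ℝ (LinearMap.ker f) = 1 := by
    have h1 := LinearMap.finrank_range_add_finrank_ker f
    rw [hrange] at h1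
    simp only [finrank_top] at h1
    have h2 : Module.finrank ℝ (ℝ × ℝ) = 2 := by
      simp [Module.finrank_prod]
    have h3 : Module.finrank ℝ ℝ = 1 := Module.finrank_self ℝ
    omega
  have hvs : vectorSpan ℝ ((t : Set (ℝ × ℝ))) ≤ LinearMap.ker f := by
    rw [vectorSpan_def]
    rw [Submodule.span_le]
    rintro u ⟨a, ha, b, hb, rfl⟩
    simp only [SetLike.mem_coe, LinearMap.mem_ker, vsub_eq_sub, map_sub]
    rw [htline a ha, htline b hb, sub_self]
  have hfr : Module.finrank ℝ (vectorSpan ℝ ((t : Set (ℝ × ℝ)))) ≤ 1 := by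
    rw [← hker]
    exact Submodule.finrank_mono hvs
  have hcard : t.card ≤ 2 := by
    by_contra h
    push_neg at h
    have hc : Fintype.card ↑t = (t.card - 1) + 1 := by
      rw [Fintype.card_coe]; omega
    have h4 := hai.finrank_vectorSpan hc
    have h5 : Set.range (Subtype.val : {x // x ∈ t} → ℝ × ℝ) = (↑t : Set (ℝ × ℝ)) := by
      ext y; simp
    rw [h5] at h4
    omega
  have ht1 : 1 ≤ t.card := by
    rcases t.eq_empty_or_nonempty with rfl | hne
    · simp at hxt
    · exact hne.card_pos
  interval_cases h : t.card
  · -- card = 1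
    obtain ⟨a, rfl⟩ := Finset.card_eq_one.1 h
    simp only [Finset.coe_singleton, convexHull_singleton, Set.mem_singleton_iff] at hxt
    refine ⟨a, htY a (by simp), a, htY a (by simp), 1, ⟨zero_le_one, le_refl 1⟩, ?_⟩
    rw [hxt]; simp
  · -- card = 2
    obtain ⟨a, b, hab, rfl⟩ := Finset.card_eq_two.1 h
    rw [Finset.coe_insert, Finset.coe_singleton, convexHull_pair] at hxt
    obtain ⟨u, v', hu, hv', huv, hcomb⟩ := hxt
    refine ⟨a, htY a (by simp), b, htY b (by simp), u, ⟨hu, by linarith⟩, ?_⟩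
    rw [show (1 : ℝ) - u = v' by linarith]
    exact hcomb.symm

theorem stmt11 (ψ : ℝ × ℝ → ℝ) (hcont : Continuous ψ)
    (hqc : ∀ c : ℝ, Convex ℝ {p : ℝ × ℝ | c ≤ ψ p})
    (hmono : ∀ p : ℝ × ℝ, ∀ ε : ℝ, 0 < ε → ψ p < ψ (p.1 + ε, p.2 + ε))
    (Y : Finset (ℝ × ℝ)) (x : ℝ × ℝ)
    (hx : x ∈ convexHull ℝ (Y : Set (ℝ × ℝ)))
    (hmax : ∀ p ∈ convexHull ℝ (Y : Set (ℝ × ℝ)), ψ p ≤ ψ x) :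
    x ∈ frontier (convexHull ℝ (Y : Set (ℝ × ℝ))) ∧
      ∃ y₁ ∈ Y, ∃ y₂ ∈ Y, ∃ t : ℝ, t ∈ Set.Icc (0 : ℝ) 1 ∧
        x = t • y₁ + (1 - t) • y₂ := by
  classical
  set S := convexHull ℝ (Y : Set (ℝ × ℝ)) with hS
  have hSclosed : IsClosed S := Y.finite_toSet.isClosed_convexHull (𝕜 := ℝ)
  have hSconv : Convex ℝ S := convex_convexHull ℝ _
  have hnotint : x ∉ interior S := by
    intro h
    rw [mem_interior_iff_mem_nhds, Metric.mem_nhds_iff] at h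
    obtain ⟨ε, hε, hball⟩ := h
    have hp : (x.1 + ε / 2, x.2 + ε / 2) ∈ S := by
      apply hball
      rw [Metric.mem_ball, Prod.dist_eq]
      have : dist (x.1 + ε / 2) x.1 = ε / 2 := by
        rw [Real.dist_eq]; rw [show x.1 + ε / 2 - x.1 = ε / 2 by ring]
        exact abs_of_pos (by linarith)
      have h2 : dist (x.2 + ε / 2) x.2 = ε / 2 := by
        rw [Real.dist_eq]; rw [show x.2 + ε / 2 - x.2 = ε / 2 by ring]
        exact abs_of_pos (by linarith)
      simp only [this, h2, max_self]
      linarith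
    exact absurd (hmax _ hp) (not_le.2 (hmono x (ε / 2) (by linarith)))
  have hfront : x ∈ frontier S := by
    rw [frontier, hSclosed.closure_eq]
    exact ⟨hx, hnotint⟩
  refine ⟨hfront, ?_⟩
  obtain ⟨f, hf, hle⟩ : ∃ f : (ℝ × ℝ) →ₗ[ℝ] ℝ, f ≠ 0 ∧ ∀ p ∈ S, f p ≤ f x := by
    by_cases hint : (interior S).Nonempty
    · obtain ⟨g, hg⟩ := geometric_hahn_banach_open_point hSconv.interior isOpen_interior hnotint
      obtain ⟨a, ha⟩ := hint
      refine ⟨g.toLinearMap, ?_, ?_⟩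
      · intro h0
        have h1 := hg a ha
        have h2 : g.toLinearMap a = g.toLinearMap x → False := by
          intro hh; simp only [ContinuousLinearMap.coe_coe] at hh; linarith
        exact h2 (by rw [h0]; simp)
      · intro p hp
        simp only [ContinuousLinearMap.coe_coe]
        have htend : Filter.Tendsto (fun θ : ℝ => g (θ • p + (1 - θ) • a))
            (nhdsWithin 1 (Set.Ioo (0 : ℝ) 1)) (nhds (g p)) := by
          have hc : Continuous fun θ : ℝ => g (θ • p + (1 - θ) • a) := by
            apply g.continuous.comp
            continuity
          have h1 := hc.tendsto 1
          simp only [one_smul, sub_self, zero_smul, add_zero] at h1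
          exact h1.mono_left nhdsWithin_le_nhds
        haveI := right_nhdsWithin_Ioo_neBot (show (0 : ℝ) < 1 by norm_num)
        refine le_of_tendsto htend ?_
        filter_upwards [self_mem_nhdsWithin] with θ hθ
        exact (hg _ (hSconv.combo_closure_interior_mem_interior
          (subset_closure hp) ha hθ.1.le (by linarith [hθ.2]) (by ring))).le
    · have hspan : affineSpan ℝ S ≠ ⊤ := fun h =>
        hint ((hSconv.interior_nonempty_iff_affineSpan_eq_top).2 h)
      have hne : ((affineSpan ℝ S : AffineSubspace ℝ (ℝ × ℝ)) : Set (ℝ × ℝ)).Nonempty :=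
        ⟨x, subset_affineSpan ℝ S hx⟩
      have hdir : (affineSpan ℝ S).direction ≠ ⊤ := fun h =>
        hspan ((AffineSubspace.direction_eq_top_iff_of_nonempty hne).1 h)
      obtain ⟨f, hf, hmap⟩ :=
        Submodule.exists_dual_map_eq_bot_of_lt_top (lt_top_iff_ne_top.2 hdir) inferInstance
      refine ⟨f, hf, fun p hp => ?_⟩
      have hmem : p - x ∈ (affineSpan ℝ S).direction := by
        have := AffineSubspace.vsub_mem_direction
          (subset_affineSpan ℝ S hp) (subset_affineSpan ℝ S hx)
        simpa using this
      have h0 : f (p - x) = 0 := by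
        have : f (p - x) ∈ Submodule.map f (affineSpan ℝ S).direction := ⟨_, hmem, rfl⟩
        rwa [hmap, Submodule.mem_bot] at this
      rw [map_sub] at h0
      linarith
  exact key_two_points f hf Y x hx hle
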